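/- Let x ∈ ∂ℝ₊^d and let H_x = {y ∈ ℝ^d : y_j = 0 for all j ∈ 𝓘(x)} where 𝓘(x) = {j : x_j = 0} ≠ ∅, and let span[R(x)] be the span of {R_j : j ∈ 𝓘(x)} where R = I − Qᵀ for a nonnegative matrix Q with zero diagonal and spectral radius < 1. Then H_x ∩ span[R(x)] = {0}, and consequently every y ∈ ℝ^d admits a unique decomposition y = v + w with v ∈ H_x and w ∈ span[R(x)]; moreover the map 𝓛_x : ℝ^d → H_x sending y to v is linear. -/

import Mathlib

open scoped ENNReal

open Filter Topology

lemma pos_eigen {d : ℕ} (A : Matrix (Fin d) (Fin d) ℝ) (hA : ∀ i j, 0 < A i j)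
    (u : Fin d → ℝ) (hu0 : ∀ i, 0 ≤ u i) (hune : u ≠ 0)
    (hle : ∀ i, u i ≤ ∑ j, A i j * u j) :
    ∃ (lam : ℝ) (v : Fin d → ℝ), 1 ≤ lam ∧ (∀ i, 0 ≤ v i) ∧ (∑ i, v i = 1) ∧
      ∀ i, ∑ j, A i j * v j = lam * v i := by
  classical
  obtain ⟨i₀, hi₀⟩ := Function.ne_iff.mp hune
  have hd : Nonempty (Fin d) := ⟨i₀⟩
  set N : ℝ := ∑ i, ∑ j, A i j with hN
  set K : Set (ℝ × (Fin d → ℝ)) :=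
    {p | 1 ≤ p.1 ∧ (∀ i, 0 ≤ p.2 i) ∧ (∑ i, p.2 i = 1) ∧
      ∀ i, p.1 * p.2 i ≤ ∑ j, A i j * p.2 j} with hK
  -- closedness
  have hclosed : IsClosed K := by
    have h1 : IsClosed {p : ℝ × (Fin d → ℝ) | 1 ≤ p.1} :=
      isClosed_le continuous_const continuous_fst
    have h2 : IsClosed {p : ℝ × (Fin d → ℝ) | ∀ i, 0 ≤ p.2 i} := by
      rw [Set.setOf_forall]
      exact isClosed_iInter fun i =>
        isClosed_le continuous_const ((continuous_apply i).comp continuous_snd)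
    have h3 : IsClosed {p : ℝ × (Fin d → ℝ) | ∑ i, p.2 i = 1} :=
      isClosed_eq (continuous_finset_sum _ fun i _ =>
        (continuous_apply i).comp continuous_snd) continuous_const
    have h4 : IsClosed {p : ℝ × (Fin d → ℝ) | ∀ i, p.1 * p.2 i ≤ ∑ j, A i j * p.2 j} := by
      rw [Set.setOf_forall]
      exact isClosed_iInter fun i => isClosed_le
        (continuous_fst.mul ((continuous_apply i).comp continuous_snd))
        (continuous_finset_sum _ fun j _ =>
          continuous_const.mul ((continuous_apply j).comp continuous_snd))
    have hKeq : K = {p : ℝ × (Fin d → ℝ) | 1 ≤ p.1} ∩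
        ({p | ∀ i, 0 ≤ p.2 i} ∩ ({p | ∑ i, p.2 i = 1} ∩
          {p | ∀ i, p.1 * p.2 i ≤ ∑ j, A i j * p.2 j})) := rfl
    rw [hKeq]
    exact h1.inter (h2.inter (h3.inter h4))
  -- boundedness
  have hsub : K ⊆ Set.Icc ((1 : ℝ), (fun _ => 0 : Fin d → ℝ)) (N, fun _ => 1) := by
    rintro ⟨lam, v⟩ ⟨h1, h2, h3, h4⟩
    dsimp only at h1 h2 h3 h4
    have hv1 : ∀ i, v i ≤ 1 := by
      intro i
      calc v i ≤ ∑ j, v j := Finset.single_le_sum (fun j _ => h2 j) (Finset.mem_univ i)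
        _ = 1 := h3
    have hlamN : lam ≤ N := by
      have h5 : lam * 1 ≤ N := by
        rw [← h3, Finset.mul_sum]
        apply Finset.sum_le_sum
        intro i _
        calc lam * v i ≤ ∑ j, A i j * v j := h4 i
          _ ≤ ∑ j, A i j := Finset.sum_le_sum fun j _ => by
              nlinarith [hA i j, hv1 j, h2 j]
      linarith
    rw [Set.mem_Icc]
    exact ⟨⟨by dsimp only; linarith, fun i => h2 i⟩, ⟨by dsimp only; linarith, fun i => hv1 i⟩⟩
  have hcpt : IsCompact K := IsCompact.of_isClosed_subset isCompact_Icc hclosed hsub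
  -- nonemptiness
  have hne : K.Nonempty := by
    have hsum : 0 < ∑ i, u i :=
      Finset.sum_pos' (fun i _ => hu0 i)
        ⟨i₀, Finset.mem_univ _, (hu0 i₀).lt_of_ne (Ne.symm hi₀)⟩
    refine ⟨(1, fun i => (∑ i, u i)⁻¹ * u i), le_refl 1, ?_, ?_, ?_⟩
    · exact fun i => mul_nonneg (inv_nonneg.mpr hsum.le) (hu0 i)
    · dsimp only; rw [← Finset.mul_sum, inv_mul_cancel₀ hsum.ne']
    · intro i
      dsimp only
      rw [one_mul]
      have heq : ∑ j, A i j * ((∑ i, u i)⁻¹ * u j) = (∑ i, u i)⁻¹ * ∑ j, A i j * u j := by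
        rw [Finset.mul_sum]; exact Finset.sum_congr rfl fun j _ => by ring
      rw [heq]
      exact mul_le_mul_of_nonneg_left (hle i) (inv_nonneg.mpr hsum.le)
  obtain ⟨⟨lam, v⟩, hmem, hmax⟩ := hcpt.exists_isMaxOn hne continuous_fst.continuousOn
  obtain ⟨h1, h2, h3, h4⟩ := hmem
  dsimp only at h1 h2 h3 h4
  refine ⟨lam, v, h1, h2, h3, ?_⟩
  by_contra hne2
  push_neg at hne2
  obtain ⟨i₁, hi₁⟩ := hne2
  set w : Fin d → ℝ := fun i => ∑ j, A i j * v j with hw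
  set z : Fin d → ℝ := fun i => w i - lam * v i with hz
  have hz0 : ∀ i, 0 ≤ z i := fun i => sub_nonneg.mpr (h4 i)
  have hzne : 0 < z i₁ := by
    rcases (hz0 i₁).lt_or_eq with h | h
    · exact h
    · exfalso; apply hi₁; have := h.symm; rw [hz] at this
      dsimp only at this
      linarith [sub_eq_zero.mp this]
  have hvpos : ∃ j, 0 < v j := by
    by_contra h
    push_neg at h
    have : ∑ i, v i = 0 := Finset.sum_eq_zero fun i _ => le_antisymm (h i) (h2 i)
    rw [h3] at this; norm_num at this
  obtain ⟨j₀, hj₀⟩ := hvpos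
  have hwpos : ∀ i, 0 < w i := fun i =>
    Finset.sum_pos' (fun j _ => mul_nonneg (hA i j).le (h2 j))
      ⟨j₀, Finset.mem_univ _, mul_pos (hA i j₀) hj₀⟩
  have hAzpos : ∀ i, 0 < ∑ j, A i j * z j := fun i =>
    Finset.sum_pos' (fun j _ => mul_nonneg (hA i j).le (hz0 j))
      ⟨i₁, Finset.mem_univ _, mul_pos (hA i i₁) hzne⟩
  set ε : ℝ := Finset.univ.inf' Finset.univ_nonempty (fun i => (∑ j, A i j * z j) / w i)
    with hε
  have hεpos : 0 < ε := by
    rw [hε, Finset.lt_inf'_iff]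
    exact fun i _ => div_pos (hAzpos i) (hwpos i)
  have hkey : ∀ i, (lam + ε) * w i ≤ ∑ j, A i j * w j := by
    intro i
    have h5 : ∑ j, A i j * w j = lam * w i + ∑ j, A i j * z j := by
      have hterm : ∀ j, A i j * w j = A i j * (lam * v j) + A i j * z j := by
        intro j; rw [hz]; ring
      rw [Finset.sum_congr rfl (fun j _ => hterm j), Finset.sum_add_distrib]
      congr 1
      rw [hw, Finset.mul_sum]
      exact Finset.sum_congr rfl fun j _ => by ring
    have h6 : ε * w i ≤ ∑ j, A i j * z j := by
      have hle' : ε ≤ (∑ j, A i j * z j) / w i := Finset.inf'_le _ (Finset.mem_univ i)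
      calc ε * w i ≤ ((∑ j, A i j * z j) / w i) * w i :=
            mul_le_mul_of_nonneg_right hle' (hwpos i).le
        _ = ∑ j, A i j * z j := div_mul_cancel₀ _ (hwpos i).ne'
    rw [h5]; nlinarith [h6]
  have hsw : 0 < ∑ i, w i := Finset.sum_pos (fun i _ => hwpos i) Finset.univ_nonempty
  have hmem' : ((lam + ε, fun i => (∑ i, w i)⁻¹ * w i) : ℝ × (Fin d → ℝ)) ∈ K := by
    refine ⟨by dsimp only; linarith, fun i => mul_nonneg (inv_nonneg.mpr hsw.le) (hwpos i).le,
      ?_, ?_⟩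
    · dsimp only; rw [← Finset.mul_sum, inv_mul_cancel₀ hsw.ne']
    · intro i
      dsimp only
      have heq : ∑ j, A i j * ((∑ i, w i)⁻¹ * w j) = (∑ i, w i)⁻¹ * ∑ j, A i j * w j := by
        rw [Finset.mul_sum]; exact Finset.sum_congr rfl fun j _ => by ring
      rw [heq]
      calc (lam + ε) * ((∑ i, w i)⁻¹ * w i) = (∑ i, w i)⁻¹ * ((lam + ε) * w i) := by ring
        _ ≤ (∑ i, w i)⁻¹ * ∑ j, A i j * w j :=
            mul_le_mul_of_nonneg_left (hkey i) (inv_nonneg.mpr hsw.le)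
  have hcontra : lam + ε ≤ lam := hmax hmem'
  linarith


lemma nonneg_eigen {d : ℕ} (A : Matrix (Fin d) (Fin d) ℝ) (hA : ∀ i j, 0 ≤ A i j)
    (u : Fin d → ℝ) (hu0 : ∀ i, 0 ≤ u i) (hune : u ≠ 0)
    (hle : ∀ i, u i ≤ ∑ j, A i j * u j) :
    ∃ (lam : ℝ) (v : Fin d → ℝ), 1 ≤ lam ∧ v ≠ 0 ∧
      ∀ i, ∑ j, A i j * v j = lam * v i := by
  classical
  obtain ⟨i₀, hi₀⟩ := Function.ne_iff.mp hune
  have hd : Nonempty (Fin d) := ⟨i₀⟩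
  -- perturbed matrices
  set B : ℕ → Matrix (Fin d) (Fin d) ℝ := fun n => Matrix.of fun i j => A i j + ((n : ℝ) + 1)⁻¹
    with hB
  have hBpos : ∀ n i j, 0 < B n i j := fun n i j =>
    add_pos_of_nonneg_of_pos (hA i j) (by positivity)
  have hBle : ∀ n i, u i ≤ ∑ j, B n i j * u j := by
    intro n i
    refine le_trans (hle i) (Finset.sum_le_sum fun j _ => ?_)
    have : 0 ≤ ((n : ℝ) + 1)⁻¹ * u j := mul_nonneg (by positivity) (hu0 j)
    simp only [hB, Matrix.of_apply]
    nlinarith [hu0 j]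
  have hex : ∀ n : ℕ, ∃ (lam : ℝ) (v : Fin d → ℝ), 1 ≤ lam ∧ (∀ i, 0 ≤ v i) ∧
      (∑ i, v i = 1) ∧ ∀ i, ∑ j, B n i j * v j = lam * v i := fun n =>
    pos_eigen (B n) (hBpos n) u hu0 hune (hBle n)
  choose lams vs hlam1 hvs0 hvs1 heig using hex
  -- uniform bound on lams
  set C : ℝ := ∑ i, ∑ j, (A i j + 1) with hC
  have hlamC : ∀ n, lams n ≤ C := by
    intro n
    have h1 : lams n = ∑ i, lams n * vs n i := by
      rw [← Finset.mul_sum, hvs1 n, mul_one]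
    have hv1 : ∀ i, vs n i ≤ 1 := fun i => by
      calc vs n i ≤ ∑ j, vs n j :=
        Finset.single_le_sum (fun j _ => hvs0 n j) (Finset.mem_univ i)
        _ = 1 := hvs1 n
    rw [h1, hC]
    apply Finset.sum_le_sum
    intro i _
    rw [← heig n i]
    apply Finset.sum_le_sum
    intro j _
    have hB1 : B n i j ≤ A i j + 1 := by
      simp only [hB, Matrix.of_apply]
      have : ((n : ℝ) + 1)⁻¹ ≤ 1 := by
        rw [inv_le_one_iff₀]; right; linarith [(Nat.cast_nonneg n : (0:ℝ) ≤ n)]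
      linarith
    nlinarith [hBpos n i j, hvs0 n j, hv1 j]
  -- compactness
  set K : Set (ℝ × (Fin d → ℝ)) := Set.Icc ((1 : ℝ), (fun _ => 0 : Fin d → ℝ)) (C, fun _ => 1)
    with hK
  have hmemK : ∀ n, (lams n, vs n) ∈ K := by
    intro n
    rw [hK, Set.mem_Icc]
    refine ⟨⟨hlam1 n, fun i => hvs0 n i⟩, ⟨hlamC n, fun i => ?_⟩⟩
    calc vs n i ≤ ∑ j, vs n j :=
      Finset.single_le_sum (fun j _ => hvs0 n j) (Finset.mem_univ i)
      _ = 1 := hvs1 n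
  obtain ⟨⟨lam, v⟩, hmemlim, φ, hφ, htend⟩ :=
    isCompact_Icc.tendsto_subseq (x := fun n => (lams n, vs n)) hmemK
  have htlam : Tendsto (fun n => lams (φ n)) atTop (nhds lam) :=
    (continuous_fst.tendsto _).comp htend
  have htv : ∀ i, Tendsto (fun n => vs (φ n) i) atTop (nhds (v i)) := fun i =>
    (((continuous_apply i).comp continuous_snd).tendsto _).comp htend
  have hεtend : Tendsto (fun n => ((φ n : ℝ) + 1)⁻¹) atTop (nhds 0) := by
    have h : Tendsto (fun n : ℕ => 1 / ((n : ℝ) + 1)) atTop (nhds 0) :=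
      tendsto_one_div_add_atTop_nhds_zero_nat
    have := h.comp hφ.tendsto_atTop
    simpa [one_div, Function.comp_def] using this
  refine ⟨lam, v, ?_, ?_, ?_⟩
  · exact ge_of_tendsto htlam (Eventually.of_forall fun n => hlam1 (φ n))
  · -- v ≠ 0 since ∑ v = 1
    have hsum : Tendsto (fun n => ∑ i, vs (φ n) i) atTop (nhds (∑ i, v i)) :=
      tendsto_finset_sum _ fun i _ => htv i
    have hsum1 : Tendsto (fun n => ∑ i, vs (φ n) i) atTop (nhds 1) := by
      simpa [hvs1] using tendsto_const_nhds (x := (1:ℝ)) (f := atTop (α := ℕ))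
    have : (∑ i, v i) = 1 := tendsto_nhds_unique hsum hsum1
    intro hv0
    rw [hv0] at this
    simp at this
  · intro i
    have hL : Tendsto (fun n => ∑ j, A i j * vs (φ n) j) atTop
        (nhds (∑ j, A i j * v j)) :=
      tendsto_finset_sum _ fun j _ => (htv j).const_mul _
    have hR : Tendsto (fun n => lams (φ n) * vs (φ n) i - ((φ n : ℝ) + 1)⁻¹) atTop
        (nhds (lam * v i - 0)) := (htlam.mul (htv i)).sub hεtend
    have heq : ∀ n, ∑ j, A i j * vs (φ n) j
        = lams (φ n) * vs (φ n) i - ((φ n : ℝ) + 1)⁻¹ := by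
      intro n
      have h1 := heig (φ n) i
      have h2 : ∑ j, B (φ n) i j * vs (φ n) j
          = ∑ j, A i j * vs (φ n) j + ((φ n : ℝ) + 1)⁻¹ * ∑ j, vs (φ n) j := by
        rw [Finset.mul_sum, ← Finset.sum_add_distrib]
        exact Finset.sum_congr rfl fun j _ => by simp only [hB, Matrix.of_apply]; ring
      rw [h2, hvs1] at h1
      linarith
    have hL' : Tendsto (fun n => ∑ j, A i j * vs (φ n) j) atTop (nhds (lam * v i - 0)) := by
      rw [funext heq]; exact hR
    have := tendsto_nhds_unique hL hL'
    rw [this]; ring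

lemma pf_lite {d : ℕ} (Q : Matrix (Fin d) (Fin d) ℝ)
    (hQnonneg : ∀ i j, 0 ≤ Q i j) (hspec : spectralRadius ℝ Q < 1)
    (u : Fin d → ℝ) (hu0 : ∀ i, 0 ≤ u i)
    (hle : ∀ i, u i ≤ ∑ j, Q j i * u j) : u = 0 := by
  classical
  by_contra hune
  obtain ⟨lam, v, hlam, hvne, heig⟩ :=
    nonneg_eigen Q.transpose (fun i j => hQnonneg j i) u hu0 hune hle
  -- (lam • 1 - Qᵀ).mulVec v = 0
  have hmv : (lam • (1 : Matrix (Fin d) (Fin d) ℝ) - Q.transpose).mulVec v = 0 := by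
    funext i
    simp only [Matrix.sub_mulVec, Matrix.smul_mulVec, Matrix.one_mulVec,
      Pi.sub_apply, Pi.smul_apply, Pi.zero_apply, smul_eq_mul]
    have : Q.transpose.mulVec v i = ∑ j, Q.transpose i j * v j := rfl
    rw [this]
    have := heig i
    simp only [Matrix.transpose_apply] at this ⊢
    linarith
  have hdet : (lam • (1 : Matrix (Fin d) (Fin d) ℝ) - Q.transpose).det = 0 :=
    Matrix.exists_mulVec_eq_zero_iff.mp ⟨v, hvne, hmv⟩
  have hdet2 : (lam • (1 : Matrix (Fin d) (Fin d) ℝ) - Q).det = 0 := by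
    have htr : (lam • (1 : Matrix (Fin d) (Fin d) ℝ) - Q).transpose
        = lam • (1 : Matrix (Fin d) (Fin d) ℝ) - Q.transpose := by
      rw [Matrix.transpose_sub, Matrix.transpose_smul, Matrix.transpose_one]
    rw [← Matrix.det_transpose, htr, hdet]
  have hmem : lam ∈ spectrum ℝ Q := by
    rw [spectrum.mem_iff, Algebra.algebraMap_eq_smul_one]
    intro hunit
    rw [Matrix.isUnit_iff_isUnit_det, hdet2] at hunit
    exact not_isUnit_zero hunit
  have hrad : (‖lam‖₊ : ℝ≥0∞) ≤ spectralRadius ℝ Q := by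
    rw [spectralRadius]
    exact le_iSup₂ (f := fun k (_ : k ∈ spectrum ℝ Q) => (‖k‖₊ : ℝ≥0∞)) lam hmem
  have h1 : (1 : ℝ≥0∞) ≤ (‖lam‖₊ : ℝ≥0∞) := by
    rw [ENNReal.one_le_coe_iff]
    have : (1 : ℝ) ≤ ‖lam‖ := by
      rw [Real.norm_eq_abs]
      exact le_trans hlam (le_abs_self lam)
    exact_mod_cast this
  exact absurd (lt_of_le_of_lt (le_trans h1 hrad) hspec) (lt_irrefl _)



lemma ext_zero {d : ℕ} (Q : Matrix (Fin d) (Fin d) ℝ)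
    (hQnonneg : ∀ i j, 0 ≤ Q i j) (hspec : spectralRadius ℝ Q < 1)
    (x : Fin d → ℝ) (c : Fin d → ℝ)
    (hsupp : ∀ j, x j ≠ 0 → c j = 0)
    (hker : ∀ i, x i = 0 → ∑ j, (1 - Q.transpose) i j * c j = 0) : c = 0 := by
  classical
  have hexp : ∀ i, ∑ j, (1 - Q.transpose) i j * c j = c i - ∑ j, Q j i * c j := by
    intro i
    simp only [Matrix.sub_apply, Matrix.one_apply, Matrix.transpose_apply, sub_mul,
      Finset.sum_sub_distrib]
    congr 1
    simp [Finset.sum_ite_eq, ite_mul]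
  have hu : (fun i => |c i|) = 0 := by
    apply pf_lite Q hQnonneg hspec _ (fun i => abs_nonneg _)
    intro i
    by_cases hxi : x i = 0
    · have h1 := hker i hxi
      rw [hexp i] at h1
      have h2 : c i = ∑ j, Q j i * c j := by linarith
      calc |c i| = |∑ j, Q j i * c j| := by rw [← h2]
        _ ≤ ∑ j, |Q j i * c j| := Finset.abs_sum_le_sum_abs _ _
        _ = ∑ j, Q j i * |c j| := Finset.sum_congr rfl fun j _ => by
            rw [abs_mul, abs_of_nonneg (hQnonneg j i)]
    · rw [hsupp i hxi, abs_zero]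
      exact Finset.sum_nonneg fun j _ => mul_nonneg (hQnonneg j i) (abs_nonneg _)
  funext i
  have := congrFun hu i
  simpa [abs_eq_zero] using this

/-- For a boundary point `x ∈ ∂ℝ₊^d` and `R = I − Qᵀ` with `Q` nonnegative, zero diagonal
and spectral radius `< 1`: the subspace `H_x = {y : y_j = 0 for j ∈ 𝓘(x)}` meets
`span{R_j : j ∈ 𝓘(x)}` only in `0`; every `y` decomposes uniquely as `y = v + w` with
`v ∈ H_x`, `w ∈ span R(x)`; and the projection `y ↦ v` is realized by a linear map. -/
theorem boundary_decomposition (d : ℕ) (Q : Matrix (Fin d) (Fin d) ℝ)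
    (hQnonneg : ∀ i j, 0 ≤ Q i j) (hQdiag : ∀ i, Q i i = 0)
    (hspec : spectralRadius ℝ Q < 1)
    (x : Fin d → ℝ) (hx : ∀ i, 0 ≤ x i) (hbdry : ∃ j, x j = 0) :
    let R : Matrix (Fin d) (Fin d) ℝ := 1 - Q.transpose
    let spanRx : Submodule ℝ (Fin d → ℝ) :=
      Submodule.span ℝ ((fun j => fun i => R i j) '' {j | x j = 0})
    (∀ y : Fin d → ℝ, (∀ j, x j = 0 → y j = 0) → y ∈ spanRx → y = 0)
    ∧ (∀ y : Fin d → ℝ, ∃! vw : (Fin d → ℝ) × (Fin d → ℝ),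
        (∀ j, x j = 0 → vw.1 j = 0) ∧ vw.2 ∈ spanRx ∧ y = vw.1 + vw.2)
    ∧ (∃ L : (Fin d → ℝ) →ₗ[ℝ] (Fin d → ℝ), ∀ y : Fin d → ℝ,
        (∀ j, x j = 0 → L y j = 0) ∧ y - L y ∈ spanRx) := by
  classical
  intro R spanRx
  set ι := {j : Fin d // x j = 0} with hι
  set b : ι → (Fin d → ℝ) := fun k => fun i => R i ↑k with hb
  have hspan : spanRx = Submodule.span ℝ (Set.range b) := by
    show Submodule.span ℝ _ = _
    congr 1
    rw [Set.image_eq_range]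
    rfl
  set ext : (ι → ℝ) → (Fin d → ℝ) := fun c j => if h : x j = 0 then c ⟨j, h⟩ else 0
    with hext
  have hextsupp : ∀ c j, x j ≠ 0 → ext c j = 0 := by
    intro c j hj; simp [hext, dif_neg hj]
  have hrepr : ∀ (c : ι → ℝ) (i : Fin d),
      (∑ k : ι, c k • b k) i = ∑ j, R i j * ext c j := by
    intro c i
    have h1 : ∑ j, R i j * ext c j
        = ∑ j ∈ Finset.univ.filter (fun j => x j = 0), R i j * ext c j :=
      (Finset.sum_subset (Finset.filter_subset _ _) (fun j _ hj => by
        simp only [Finset.mem_filter, Finset.mem_univ, true_and] at hj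
        simp [hext, dif_neg hj])).symm
    have h2 : ∑ j ∈ Finset.univ.filter (fun j => x j = 0), R i j * ext c j
        = ∑ k : ι, R i ↑k * ext c ↑k := Finset.sum_subtype _ (by simp) _
    rw [h1, h2, Finset.sum_apply]
    refine Finset.sum_congr rfl fun k _ => ?_
    simp only [hext, hb, Pi.smul_apply, smul_eq_mul, dif_pos k.2, Subtype.coe_eta]
    ring
  -- the core vanishing result
  have hcore : ∀ (c : ι → ℝ), (∀ i, x i = 0 → (∑ k : ι, c k • b k) i = 0) → ∀ k, c k = 0 := by
    intro c hc k
    have hz : ext c = 0 := by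
      apply ext_zero Q hQnonneg hspec x
      · exact hextsupp c
      · intro i hi
        rw [← hrepr c i]
        exact hc i hi
    have := congrFun hz ↑k
    simpa [hext, dif_pos k.2, Subtype.coe_eta] using this
  -- Part 1
  have key : ∀ y : Fin d → ℝ, (∀ j, x j = 0 → y j = 0) → y ∈ spanRx → y = 0 := by
    intro y hy hmem
    rw [hspan, Submodule.mem_span_range_iff_exists_fun] at hmem
    obtain ⟨c, hc⟩ := hmem
    have hc0 : ∀ k, c k = 0 := hcore c (fun i hi => by rw [hc]; exact hy i hi)
    rw [← hc]
    funext i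
    rw [Finset.sum_apply]
    exact Finset.sum_eq_zero fun k _ => by rw [hc0 k]; simp
  -- linear independence and dimensions
  have hli : LinearIndependent ℝ b := by
    rw [Fintype.linearIndependent_iff]
    intro c hc
    exact hcore c (fun i _ => by rw [hc]; rfl)
  have hdim_span : Module.finrank ℝ spanRx = Fintype.card ι := by
    rw [hspan]; exact finrank_span_eq_card hli
  -- H as kernel of restriction
  set π : (Fin d → ℝ) →ₗ[ℝ] (ι → ℝ) := LinearMap.pi (fun k => LinearMap.proj (↑k : Fin d))
    with hπ
  set H : Submodule ℝ (Fin d → ℝ) := LinearMap.ker π with hH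
  have hmemH : ∀ y : Fin d → ℝ, y ∈ H ↔ ∀ j, x j = 0 → y j = 0 := by
    intro y
    rw [hH, LinearMap.mem_ker]
    constructor
    · intro h j hj
      exact congrFun h ⟨j, hj⟩
    · intro h
      funext k
      exact h ↑k k.2
  have hπsurj : LinearMap.range π = ⊤ := by
    rw [LinearMap.range_eq_top]
    intro g
    refine ⟨fun j => if h : x j = 0 then g ⟨j, h⟩ else 0, ?_⟩
    funext k
    show (if h : x (↑k) = 0 then g ⟨↑k, h⟩ else 0) = g k
    rw [dif_pos k.2, Subtype.coe_eta]
  have hdim_H : Fintype.card ι + Module.finrank ℝ H = d := by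
    have h := LinearMap.finrank_range_add_finrank_ker π
    rw [hπsurj, finrank_top, Module.finrank_pi, Module.finrank_pi, Fintype.card_fin] at h
    exact h
  have hdisj : Disjoint H spanRx :=
    Submodule.disjoint_def.mpr (fun y hyH hyS => key y ((hmemH y).mp hyH) hyS)
  have htop : H ⊔ spanRx = ⊤ := by
    apply Submodule.eq_top_of_disjoint
    · rw [hdim_span, Module.finrank_pi, Fintype.card_fin]
      omega
    · exact hdisj
  have hcompl : IsCompl H spanRx := ⟨hdisj, codisjoint_iff.mpr htop⟩
  have hdecomp : ∀ y : Fin d → ℝ, ∃ v ∈ H, ∃ w ∈ spanRx, v + w = y := by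
    intro y
    have hy : y ∈ H ⊔ spanRx := by rw [htop]; exact Submodule.mem_top
    exact Submodule.mem_sup.mp hy
  refine ⟨key, ?_, ?_⟩
  · -- Part 2: unique decomposition
    intro y
    obtain ⟨v, hv, w, hw, hvw⟩ := hdecomp y
    refine ⟨(v, w), ⟨(hmemH v).mp hv, hw, hvw.symm⟩, ?_⟩
    rintro ⟨v', w'⟩ ⟨h1', h2', h3'⟩
    have hv' : v' ∈ H := (hmemH v').mpr h1'
    have hsum : v + w = v' + w' := hvw.trans h3'
    have hdiff2 : v' - v = w - w' := by
      rw [sub_eq_sub_iff_add_eq_add, ← hsum]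
      abel
    have hzero : v' - v = 0 := by
      apply key
      · exact (hmemH _).mp (sub_mem hv' hv)
      · rw [hdiff2]; exact sub_mem hw h2'
    have hveq : v' = v := by
      have := sub_eq_zero.mp hzero; exact this
    have hweq : w' = w := by
      have : v + w = v + w' := by rw [hsum, hveq]
      exact (add_left_cancel this).symm
    rw [Prod.mk.injEq]
    exact ⟨hveq, hweq⟩
  · -- Part 3: linear projection
    set L : (Fin d → ℝ) →ₗ[ℝ] (Fin d → ℝ) :=
      H.subtype.comp (H.linearProjOfIsCompl spanRx hcompl) with hL
    refine ⟨L, fun y => ?_⟩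
    obtain ⟨v, hv, w, hw, hvw⟩ := hdecomp y
    have h1 : L v = v :=
      congrArg Subtype.val (Submodule.linearProjOfIsCompl_apply_left hcompl ⟨v, hv⟩)
    have h2 : L w = 0 :=
      congrArg Subtype.val (Submodule.linearProjOfIsCompl_apply_right hcompl ⟨w, hw⟩)
    have hLy : L y = v := by
      rw [← hvw, map_add, h1, h2, add_zero]
    constructor
    · rw [hLy]; exact (hmemH v).mp hv
    · rw [hLy, ← hvw, add_sub_cancel_left]; exact hw
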